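/- For every integer n ≥ 0 and positive integer l, the identity N_n^{(1)}(l) = ∑ over nonnegative integers n_1,…,n_l with n_1+⋯+n_l = n of (n! / (n_1! ⋯ n_l!)) ∏_{i=1}^{l} (n_i + 1)^{n_i − 1} holds, where N_n^{(1)}(l) = l (l+n)^{n−1}. -/

import Mathlib

open Finset fwdDiff Function

noncomputable def fd : (ℝ → ℝ) → (ℝ → ℝ) := fwdDiff (1:ℝ)

lemma fd_pow_eq_zero : ∀ d n : ℕ, d < n → fd^[n] (fun y : ℝ => y ^ d) = 0 := by
  intro d
  induction d using Nat.strong_induction_on with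
  | _ d IH =>
    intro n hn
    match n, hn with
    | n + 1, hn =>
    rw [iterate_succ_apply]
    have h1 : fd (fun y : ℝ => y ^ d)
        = ∑ j ∈ range d, (d.choose j : ℝ) • fun y : ℝ => y ^ j := by
      funext y
      simp only [fd, fwdDiff, Finset.sum_apply, Pi.smul_apply, smul_eq_mul]
      rw [add_pow]
      rw [Finset.sum_range_succ]
      simp [mul_comm]
    rw [h1, fd]
    rw [fwdDiff_iter_finset_sum]
    rw [Finset.sum_eq_zero]
    intro j hj
    rw [fwdDiff_iter_const_smul]
    rw [show (fwdDiff (1:ℝ) : (ℝ→ℝ)→(ℝ→ℝ))^[n] (fun y : ℝ => y ^ j) = 0 from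
      IH j (mem_range.mp hj) n (lt_of_lt_of_le (mem_range.mp hj) (Nat.lt_succ_iff.mp hn))]
    simp

lemma alt_sum (n d : ℕ) (h : d < n) :
    ∑ k ∈ range (n + 1), (-1 : ℝ) ^ (n - k) * (n.choose k : ℝ) * (k : ℝ) ^ d = 0 := by
  have := fwdDiff_iter_eq_sum_shift (1 : ℝ) (fun y : ℝ => y ^ d) n 0
  rw [show (fwdDiff (1:ℝ))^[n] (fun y : ℝ => y ^ d) = 0 from fd_pow_eq_zero d n h] at this
  simp only [Pi.zero_apply, zsmul_eq_mul, nsmul_eq_mul, smul_eq_mul, zero_add, mul_one,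
    Int.cast_mul, Int.cast_pow, Int.cast_neg, Int.cast_one, Int.cast_natCast] at this
  rw [← this]

lemma choose_mul_sub (n k : ℕ) :
    (n + 1).choose k * (n + 1 - k) = (n + 1) * n.choose k := by
  rw [← Nat.choose_succ_right_eq, ← Nat.add_one_mul_choose_eq]

lemma term_deriv (k m : ℕ) (c : ℝ) (y : ℝ) :
    HasDerivAt (fun y : ℝ => c * (y - (k:ℝ)) ^ m) (c * ((m:ℝ) * (y - (k:ℝ)) ^ (m-1))) y := by
  have := (((hasDerivAt_id y).sub_const ((k:ℕ):ℝ)).pow m).const_mul c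
  simpa using this

lemma G_deriv (n : ℕ) (y : ℝ) :
    HasDerivAt (fun y : ℝ => (1 + y) ^ (n+1)) (((n:ℝ)+1) * (1 + y) ^ n) y := by
  have := ((hasDerivAt_id y).const_add (1:ℝ)).fun_pow (n+1)
  simpa using this

lemma F_neg_one (n : ℕ) :
    ∑ k ∈ range (n + 2), ((n+1).choose k : ℝ) * (((k+1)^(k-1) : ℕ) : ℝ) * (-1 - (k:ℝ)) ^ (n+1-k)
      = 0 := by
  have step : ∀ k ∈ range (n + 2),
      ((n+1).choose k : ℝ) * (((k+1)^(k-1) : ℕ) : ℝ) * (-1 - (k:ℝ)) ^ (n+1-k)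
        = ∑ j ∈ range (n+1), (n.choose j : ℝ) *
            ((-1:ℝ)^(n+1-k) * ((n+1).choose k : ℝ) * (k:ℝ)^j) := by
    intro k hk
    have hk' : k ≤ n + 1 := Nat.lt_succ_iff.mp (mem_range.mp hk)
    have h1 : (-1 - (k:ℝ)) ^ (n+1-k) = (-1:ℝ)^(n+1-k) * ((k:ℝ)+1) ^ (n+1-k) := by
      rw [← mul_pow]
      ring_nf
    have h2 : (((k+1)^(k-1) : ℕ) : ℝ) * ((k:ℝ)+1) ^ (n+1-k) = ((k:ℝ)+1) ^ n := by
      push_cast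
      rw [← pow_add]
      cases k with
      | zero => simp
      | succ m =>
        congr 1
        omega
    have h3 : ((k:ℝ)+1) ^ n = ∑ j ∈ range (n+1), (n.choose j : ℝ) * (k:ℝ)^j := by
      rw [add_pow]
      apply Finset.sum_congr rfl
      intro j _
      simp [mul_comm]
    rw [h1]
    calc ((n+1).choose k : ℝ) * (((k+1)^(k-1) : ℕ) : ℝ) * ((-1:ℝ)^(n+1-k) * ((k:ℝ)+1) ^ (n+1-k))
        = ((n+1).choose k : ℝ) * (-1:ℝ)^(n+1-k) * ((((k+1)^(k-1) : ℕ) : ℝ) * ((k:ℝ)+1) ^ (n+1-k)) := by ring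
      _ = ((n+1).choose k : ℝ) * (-1:ℝ)^(n+1-k) * ∑ j ∈ range (n+1), (n.choose j : ℝ) * (k:ℝ)^j := by rw [h2, h3]
      _ = _ := by rw [Finset.mul_sum]; apply Finset.sum_congr rfl; intro j _; ring
  rw [Finset.sum_congr rfl step, Finset.sum_comm]
  apply Finset.sum_eq_zero
  intro j hj
  rw [← Finset.mul_sum, alt_sum (n+1) j (Nat.lt_succ_of_le (Nat.lt_succ_iff.mp (mem_range.mp hj))), mul_zero]

lemma abel_P : ∀ (n : ℕ) (y : ℝ),
    ∑ k ∈ range (n + 1), (n.choose k : ℝ) * (((k+1)^(k-1) : ℕ) : ℝ) * (y - (k:ℝ)) ^ (n-k)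
      = (1 + y) ^ n := by
  intro n
  induction n with
  | zero => intro y; simp
  | succ n IH =>
    intro y
    set F := fun y : ℝ => ∑ k ∈ range (n+2),
      ((n+1).choose k : ℝ) * (((k+1)^(k-1) : ℕ) : ℝ) * (y - (k:ℝ)) ^ (n+1-k) with hF
    have hderivF : ∀ z : ℝ, HasDerivAt F (((n:ℝ)+1) * (1+z)^n) z := by
      intro z
      have h : HasDerivAt F (∑ k ∈ range (n+2),
          ((n+1).choose k : ℝ) * (((k+1)^(k-1) : ℕ) : ℝ) *
            (((n+1-k : ℕ):ℝ) * (z - (k:ℝ)) ^ (n+1-k-1))) z :=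
        HasDerivAt.fun_sum (fun k _ =>
          term_deriv k (n+1-k) (((n+1).choose k : ℝ) * (((k+1)^(k-1) : ℕ) : ℝ)) z)
      have e : ∑ k ∈ range (n+2),
          ((n+1).choose k : ℝ) * (((k+1)^(k-1) : ℕ) : ℝ) *
            (((n+1-k : ℕ):ℝ) * (z - (k:ℝ)) ^ (n+1-k-1))
          = ((n:ℝ)+1) * (1+z)^n := by
        rw [Finset.sum_range_succ]
        have hlast : ((n+1-(n+1) : ℕ):ℝ) = 0 := by norm_num
        rw [Nat.sub_self]
        simp only [Nat.cast_zero, zero_mul, mul_zero, add_zero]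
        rw [← IH z, Finset.mul_sum]
        apply Finset.sum_congr rfl
        intro k hk
        have hk' : k ≤ n := Nat.lt_succ_iff.mp (mem_range.mp hk)
        have h1 : n + 1 - k - 1 = n - k := by omega
        have h2 : (((n+1).choose k : ℝ)) * ((n+1-k : ℕ):ℝ) = ((n:ℝ)+1) * (n.choose k : ℝ) := by
          have h := congrArg (fun t : ℕ => (t:ℝ)) (choose_mul_sub n k)
          simp only [Nat.cast_mul, Nat.cast_add, Nat.cast_one] at h
          exact h
        rw [h1]
        calc ((n+1).choose k : ℝ) * (((k+1)^(k-1) : ℕ) : ℝ) * (((n+1-k : ℕ):ℝ) * (z - (k:ℝ)) ^ (n-k))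
            = (((n+1).choose k : ℝ) * ((n+1-k : ℕ):ℝ)) * ((((k+1)^(k-1) : ℕ) : ℝ) * (z - (k:ℝ)) ^ (n-k)) := by ring
          _ = _ := by rw [h2]; ring
      exact e ▸ h
    have hH : ∀ z : ℝ, HasDerivAt (fun y => F y - (1+y)^(n+1)) 0 z := by
      intro z
      simpa using (hderivF z).fun_sub (G_deriv n z)
    have hconst := is_const_of_deriv_eq_zero (f := fun y => F y - (1+y)^(n+1))
      (fun z => (hH z).differentiableAt) (fun z => (hH z).deriv) y (-1)
    have hFneg : F (-1) = 0 := by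
      rw [hF]
      simpa using F_neg_one n
    have : F y - (1+y)^(n+1) = 0 := by
      rw [hconst, hFneg]
      norm_num
    have hFy : F y = (1+y)^(n+1) := by linarith
    exact hFy

lemma cauchy (m : ℕ) (y : ℝ) :
    ∑ k ∈ range (m + 2), ((m+1).choose k : ℝ) * (((k+1)^(k-1) : ℕ) : ℝ) *
        ((y + ((m+1-k : ℕ):ℝ)) ^ (m+1-k) - ((m+1-k : ℕ):ℝ) * (y + ((m+1-k : ℕ):ℝ)) ^ (m+1-k-1))
      = (1 + y) * (1 + y + (m:ℝ) + 1) ^ m := by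
  have hsub : ∀ k ∈ range (m+2), y + ((m+1-k : ℕ):ℝ) = (y + (m:ℝ) + 1) - (k:ℝ) := by
    intro k hk
    have hk' : k ≤ m + 1 := Nat.lt_succ_iff.mp (mem_range.mp hk)
    have : ((m+1-k : ℕ):ℝ) = ((m:ℝ)+1) - (k:ℝ) := by
      rw [Nat.cast_sub hk']
      push_cast
      ring
    rw [this]; ring
  simp only [mul_sub]
  rw [Finset.sum_sub_distrib]
  have h1 : ∑ k ∈ range (m+2), ((m+1).choose k : ℝ) * (((k+1)^(k-1) : ℕ) : ℝ) *
      (y + ((m+1-k : ℕ):ℝ)) ^ (m+1-k) = (1 + (y + (m:ℝ) + 1)) ^ (m+1) := by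
    rw [← abel_P (m+1) (y + (m:ℝ) + 1)]
    apply Finset.sum_congr rfl
    intro k hk
    rw [hsub k hk]
  have h2 : ∑ k ∈ range (m+2), ((m+1).choose k : ℝ) * (((k+1)^(k-1) : ℕ) : ℝ) *
      (((m+1-k : ℕ):ℝ) * (y + ((m+1-k : ℕ):ℝ)) ^ (m+1-k-1))
      = ((m:ℝ)+1) * (1 + (y + (m:ℝ) + 1)) ^ m := by
    rw [Finset.sum_range_succ]
    rw [Nat.sub_self]
    simp only [Nat.cast_zero, zero_mul, mul_zero, add_zero]
    rw [← abel_P m (y + (m:ℝ) + 1), Finset.mul_sum]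
    apply Finset.sum_congr rfl
    intro k hk
    have hk' : k ≤ m := Nat.lt_succ_iff.mp (mem_range.mp hk)
    have h1' : m + 1 - k - 1 = m - k := by omega
    have h2' : (((m+1).choose k : ℝ)) * ((m+1-k : ℕ):ℝ) = ((m:ℝ)+1) * (m.choose k : ℝ) := by
      have h := congrArg (fun t : ℕ => (t:ℝ)) (choose_mul_sub m k)
      simp only [Nat.cast_mul, Nat.cast_add, Nat.cast_one] at h
      exact h
    rw [h1', hsub k (mem_range.mpr (by omega))]
    calc ((m+1).choose k : ℝ) * (((k+1)^(k-1) : ℕ) : ℝ) * (((m+1-k : ℕ):ℝ) * ((y + (m:ℝ) + 1) - (k:ℝ)) ^ (m-k))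
        = (((m+1).choose k : ℝ) * ((m+1-k : ℕ):ℝ)) * ((((k+1)^(k-1) : ℕ) : ℝ) * ((y + (m:ℝ) + 1) - (k:ℝ)) ^ (m-k)) := by ring
      _ = _ := by rw [h2']; ring
  rw [h1, h2]
  have : (1 + (y + (m:ℝ) + 1)) ^ (m+1) = (1 + (y + (m:ℝ) + 1)) * (1 + (y + (m:ℝ) + 1)) ^ m := by
    rw [pow_succ]; ring
  rw [this]
  ring_nf

lemma S_rec (l n : ℕ) :
    ∑ c ∈ Finset.Nat.antidiagonalTuple (l+1) n,
        ((n.factorial : ℝ) / ∏ i, ((c i).factorial : ℝ)) *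
          ∏ i, (((c i + 1)^(c i - 1) : ℕ) : ℝ)
      = ∑ p ∈ Finset.HasAntidiagonal.antidiagonal n, (n.choose p.1 : ℝ) * (((p.1+1)^(p.1-1) : ℕ) : ℝ) *
          ∑ c ∈ Finset.Nat.antidiagonalTuple l p.2,
            ((p.2.factorial : ℝ) / ∏ i, ((c i).factorial : ℝ)) *
              ∏ i, (((c i + 1)^(c i - 1) : ℕ) : ℝ) := by
  simp only [Finset.mul_sum]
  rw [Finset.sum_sigma']
  refine Finset.sum_bij' (fun c _ => ⟨(c 0, ∑ i, Fin.tail c i), Fin.tail c⟩)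
    (fun x _ => Fin.cons x.1.1 x.2) ?_ ?_ ?_ ?_ ?_
  · intro c hc
    rw [Finset.Nat.mem_antidiagonalTuple] at hc
    rw [Finset.mem_sigma, Finset.HasAntidiagonal.mem_antidiagonal, Finset.Nat.mem_antidiagonalTuple]
    refine ⟨?_, rfl⟩
    dsimp only
    rw [← hc, Fin.sum_univ_succ]
    rfl
  · intro x hx
    rw [Finset.mem_sigma, Finset.HasAntidiagonal.mem_antidiagonal, Finset.Nat.mem_antidiagonalTuple] at hx
    rw [Finset.Nat.mem_antidiagonalTuple, Fin.sum_cons, hx.2, hx.1]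
  · intro c _
    dsimp only
    exact Fin.cons_self_tail c
  · intro x hx
    rw [Finset.mem_sigma, Finset.HasAntidiagonal.mem_antidiagonal, Finset.Nat.mem_antidiagonalTuple] at hx
    obtain ⟨⟨a, b⟩, d⟩ := x
    dsimp only
    simp only [Fin.cons_zero, Fin.tail_cons]
    simp only at hx
    rw [hx.2]
  · intro c hc
    rw [Finset.Nat.mem_antidiagonalTuple] at hc
    dsimp only
    -- goal: (n!/∏_{Fin(l+1)} (c i)!) * ∏ A = C(n, c 0) * A_{c 0} * ((∑tail)!/∏ tail!) * ∏ A_tail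
    rw [show (fun i => ((c i).factorial : ℝ)) = fun i => ((c i).factorial : ℝ) from rfl]
    rw [← Fin.cons_self_tail c, Fin.prod_univ_succ, Fin.prod_univ_succ]
    simp only [Fin.cons_zero, Fin.cons_succ, Fin.tail_cons]
    set a := c 0
    set d := Fin.tail c
    set b := ∑ i, d i
    have hab : a + b = n := by
      rw [← hc, ← Fin.cons_self_tail c, Fin.sum_univ_succ]
      simp only [Fin.cons_zero, Fin.cons_succ]
      rfl
    have ha : a ≤ n := by omega
    have hfact : (n.factorial : ℝ) = (n.choose a : ℝ) * (a.factorial : ℝ) * (b.factorial : ℝ) := by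
      have := Nat.choose_mul_factorial_mul_factorial ha
      have hb : n - a = b := by omega
      rw [hb] at this
      exact_mod_cast this.symm
    have hP : (∏ i : Fin l, ((d i).factorial : ℝ)) ≠ 0 :=
      Finset.prod_ne_zero_iff.mpr fun i _ => Nat.cast_ne_zero.mpr (Nat.factorial_ne_zero _)
    have haf : ((a.factorial : ℝ)) ≠ 0 := Nat.cast_ne_zero.mpr (Nat.factorial_ne_zero _)
    rw [hfact]
    field_simp

lemma A_cast (m : ℕ) : ((m:ℝ)+1) ^ ((m:ℤ)-1) = (((m+1)^(m-1) : ℕ) : ℝ) := by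
  cases m with
  | zero => norm_num
  | succ k =>
    have h : ((k+1 : ℕ):ℤ) - 1 = (k : ℤ) := by push_cast; ring
    rw [h, zpow_natCast]
    push_cast
    ring

lemma split_zpow (x : ℝ) (hx : 0 < x) (m : ℕ) :
    x * (x + (m:ℝ)) ^ ((m:ℤ)-1) = (x + (m:ℝ)) ^ m - (m:ℝ) * (x + (m:ℝ)) ^ (m-1) := by
  cases m with
  | zero =>
    simp only [Nat.cast_zero, add_zero, CharP.cast_eq_zero, zero_mul, zero_sub, pow_zero]
    rw [zpow_neg, zpow_one, mul_inv_cancel₀ hx.ne']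
    norm_num
  | succ k =>
    have h : ((k+1 : ℕ):ℤ) - 1 = (k : ℤ) := by push_cast; ring
    rw [h, zpow_natCast]
    have : (x + ((k+1:ℕ):ℝ)) ^ (k+1) = (x + ((k+1:ℕ):ℝ)) * (x + ((k+1:ℕ):ℝ)) ^ k := by
      rw [pow_succ]; ring
    rw [Nat.add_sub_cancel, this]
    push_cast
    ring

lemma S_zero (l : ℕ) :
    ∑ c ∈ Finset.Nat.antidiagonalTuple l 0,
        ((Nat.factorial 0 : ℝ) / ∏ i, ((c i).factorial : ℝ)) *
          ∏ i, (((c i + 1)^(c i - 1) : ℕ) : ℝ) = 1 := by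
  rw [Finset.Nat.antidiagonalTuple_zero_right, Finset.sum_singleton]
  simp [Nat.factorial]

lemma S_eq : ∀ l : ℕ, 0 < l → ∀ n : ℕ,
    ∑ c ∈ Finset.Nat.antidiagonalTuple l n,
        ((n.factorial : ℝ) / ∏ i, ((c i).factorial : ℝ)) *
          ∏ i, (((c i + 1)^(c i - 1) : ℕ) : ℝ)
      = (l : ℝ) * ((l : ℝ) + (n : ℝ)) ^ ((n : ℤ) - 1) := by
  intro l
  induction l with
  | zero => intro h; exact absurd h (lt_irrefl 0)
  | succ l IH =>
    intro _ n
    rcases Nat.eq_zero_or_pos l with rfl | hl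
    · rw [Finset.Nat.antidiagonalTuple_one, Finset.sum_singleton]
      have h1 : ∀ i : Fin 1, (![n] i) = n := by
        intro i
        fin_cases i <;> rfl
      simp only [h1]
      rw [Finset.prod_const, Finset.prod_const, Finset.card_univ, Fintype.card_fin, pow_one,
        pow_one]
      rw [div_self ((Nat.cast_ne_zero (R := ℝ)).mpr (Nat.factorial_ne_zero n)), one_mul]
      rw [Nat.cast_one, ← A_cast n]
      rw [one_mul, add_comm]
    · rcases n with _ | m
      · rw [S_zero]
        push_cast
        rw [add_zero, zpow_neg, zpow_one,
          mul_inv_cancel₀ (by positivity : ((l:ℝ)+1) ≠ 0)]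
      · rw [S_rec l (m+1)]
        have hstep : ∀ p ∈ Finset.HasAntidiagonal.antidiagonal (m+1),
            ((m+1).choose p.1 : ℝ) * (((p.1+1)^(p.1-1) : ℕ) : ℝ) *
              ∑ c ∈ Finset.Nat.antidiagonalTuple l p.2,
                ((p.2.factorial : ℝ) / ∏ i, ((c i).factorial : ℝ)) *
                  ∏ i, (((c i + 1)^(c i - 1) : ℕ) : ℝ)
            = ((m+1).choose p.1 : ℝ) * (((p.1+1)^(p.1-1) : ℕ) : ℝ) *
              (((l:ℝ) + (p.2:ℝ)) ^ p.2 - (p.2:ℝ) * ((l:ℝ) + (p.2:ℝ)) ^ (p.2-1)) := by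
          intro p _
          rw [IH hl p.2, split_zpow (l:ℝ) (by exact_mod_cast hl) p.2]
        rw [Finset.sum_congr rfl hstep]
        rw [Finset.Nat.sum_antidiagonal_eq_sum_range_succ_mk]
        dsimp only
        rw [show (m+1).succ = m + 2 from rfl]
        have := cauchy m (l:ℝ)
        rw [this]
        rw [show ((m+1:ℕ):ℤ) - 1 = ((m:ℕ):ℤ) from by push_cast; ring, zpow_natCast]
        push_cast
        ring

theorem stmt_6 (n l : ℕ) (hl : 0 < l) :
    (l : ℝ) * ((l : ℝ) + n) ^ ((n : ℤ) - 1)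
      = ∑ c ∈ Finset.Nat.antidiagonalTuple l n,
          ((n.factorial : ℝ) / ∏ i, ((c i).factorial : ℝ)) *
            ∏ i, ((c i : ℝ) + 1) ^ ((c i : ℤ) - 1) := by
  have h : ∀ c : Fin l → ℕ,
      (∏ i, ((c i : ℝ) + 1) ^ ((c i : ℤ) - 1)) = ∏ i, (((c i + 1)^(c i - 1) : ℕ) : ℝ) :=
    fun c => Finset.prod_congr rfl fun i _ => A_cast (c i)
  calc (l : ℝ) * ((l : ℝ) + n) ^ ((n : ℤ) - 1)
      = ∑ c ∈ Finset.Nat.antidiagonalTuple l n,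
          ((n.factorial : ℝ) / ∏ i, ((c i).factorial : ℝ)) *
            ∏ i, (((c i + 1)^(c i - 1) : ℕ) : ℝ) := (S_eq l hl n).symm
    _ = _ := Finset.sum_congr rfl fun c _ => by rw [h c]
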